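/- Suppose gcd(λ_t, n-1) = 1 for every t ∈ {1, …, d}. Then the map x ↦ n-1-x on {1, …, n-2} is an order-reversing poset isomorphism of P(λ)∖{0} onto itself; that is, for all 1 ≤ i, j ≤ n-2 with i ≠ j, i ≺ j in P(λ) if and only if n-1-j ≺ n-1-i in P(λ). In particular P(λ) is self-dual. -/
import Mathlib


/-- The lattice point `p(b)` of the fundamental parallelepiped `Π_λ`:
`p(b) = ((Σ_t ⌈bλ_t/(n-1)⌉) - b, ⌈bλ_1/(n-1)⌉, …, ⌈bλ_d/(n-1)⌉) ∈ ℤ^{d+1}`. -/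
def pfun (d n : ℕ) (lam : Fin d → ℕ) (b : ℤ) : Fin (d + 1) → ℤ :=
  Fin.cons ((∑ t, ⌈(b * lam t : ℚ) / ((n : ℚ) - 1)⌉) - b)
    (fun t => ⌈(b * lam t : ℚ) / ((n : ℚ) - 1)⌉)

/-- The relation `i ≺ j` of the fundamental parallelepiped poset `P(λ)` on `{0, …, n-2}`:
`i ≺ j` iff there exists `0 < ℓ < n-1` with `p(i) + p(ℓ) = p(j)`. -/
def precRel (d n : ℕ) (lam : Fin d → ℕ) (i j : ℤ) : Prop :=
  ∃ l : ℤ, 0 < l ∧ l < (n : ℤ) - 1 ∧ pfun d n lam i + pfun d n lam l = pfun d n lam j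

/-- auxiliary: the ceiling coordinate. -/
def cC (d n : ℕ) (lam : Fin d → ℕ) (b : ℤ) (t : Fin d) : ℤ :=
  ⌈(b * lam t : ℚ) / ((n : ℚ) - 1)⌉

lemma cC_eq (d n : ℕ) (hn : 3 ≤ n) (lam : Fin d → ℕ) (b : ℤ) (t : Fin d) :
    cC d n lam b t = -((-(b * (lam t : ℤ))) / ((n - 1 : ℕ) : ℤ)) := by
  have hcast : ((n : ℚ) - 1) = ((n - 1 : ℕ) : ℤ) := by
    have : (1 : ℕ) ≤ n := by omega
    push_cast [Nat.cast_sub this]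
    ring
  have hnum : (b * (lam t) : ℚ) = ((b * (lam t : ℤ) : ℤ) : ℚ) := by push_cast; ring
  rw [cC, hnum, hcast, ← Rat.floor_intCast_div_natCast (-(b * (lam t : ℤ))) (n - 1)]
  rw [← Int.ceil_neg]
  congr 1
  push_cast
  ring

lemma pfun_eq (d n : ℕ) (lam : Fin d → ℕ) (b : ℤ) :
    pfun d n lam b = Fin.cons ((∑ t, cC d n lam b t) - b) (cC d n lam b) := rfl

/-- characterization of the relation: the witness is forced to be `j - i`. -/
lemma prec_iff (d n : ℕ) (lam : Fin d → ℕ) (i j : ℤ) :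
    precRel d n lam i j ↔
      (0 < j - i ∧ j - i < (n : ℤ) - 1 ∧
        ∀ t, cC d n lam i t + cC d n lam (j - i) t = cC d n lam j t) := by
  constructor
  · rintro ⟨l, hl0, hl1, heq⟩
    rw [pfun_eq, pfun_eq, pfun_eq] at heq
    have htail : ∀ t : Fin d, cC d n lam i t + cC d n lam l t = cC d n lam j t := by
      intro t
      have := congrFun heq t.succ
      simpa using this
    have hhead := congrFun heq 0
    simp only [Pi.add_apply, Fin.cons_zero] at hhead
    have hsumeq : (∑ t, cC d n lam i t) + (∑ t, cC d n lam l t) = ∑ t, cC d n lam j t := by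
      rw [← Finset.sum_add_distrib]
      exact Finset.sum_congr rfl fun t _ => htail t
    have hl : l = j - i := by omega
    subst hl
    exact ⟨hl0, hl1, htail⟩
  · rintro ⟨h0, h1, htail⟩
    refine ⟨j - i, h0, h1, ?_⟩
    rw [pfun_eq, pfun_eq, pfun_eq]
    funext k
    refine Fin.cases ?_ (fun t => ?_) k
    · have hsumeq : (∑ t, cC d n lam i t) + (∑ t, cC d n lam (j - i) t)
          = ∑ t, cC d n lam j t := by
        rw [← Finset.sum_add_distrib]
        exact Finset.sum_congr rfl fun t _ => htail t
      simp only [Pi.add_apply, Fin.cons_zero]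
      omega
    · simpa using htail t

lemma ediv_neg_of_not_dvd {A m : ℤ} (hm : 0 < m) (hnd : ¬ m ∣ A) :
    (-A) / m = -(A / m) - 1 := by
  have h0 := Int.emod_emod_of_dvd A (dvd_refl m)
  have hA := Int.mul_ediv_add_emod A m
  have hr0 : 0 ≤ A % m := Int.emod_nonneg A (by omega)
  have hr1 : A % m < m := Int.emod_lt_of_pos A hm
  have hrne : A % m ≠ 0 := fun h => hnd (Int.dvd_of_emod_eq_zero h)
  have expand : (-(A / m) - 1) * m = -(m * (A / m)) - m := by ring
  have key : -A = (m - A % m) + (-(A / m) - 1) * m := by linarith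
  rw [key, Int.add_mul_ediv_right _ _ (by omega : m ≠ 0)]
  have : (m - A % m) / m = 0 := Int.ediv_eq_zero_of_lt (by omega) (by omega)
  omega

/-- Key reflection identity for the ceiling coordinates. -/
lemma cC_reflect (d n : ℕ) (hn : 3 ≤ n) (lam : Fin d → ℕ)
    (hcop : ∀ t, Nat.Coprime (lam t) (n - 1)) (b : ℤ) (hb1 : 1 ≤ b)
    (hb2 : b ≤ (n : ℤ) - 2) (t : Fin d) :
    cC d n lam ((n : ℤ) - 1 - b) t = (lam t : ℤ) + 1 - cC d n lam b t := by
  set m : ℤ := ((n - 1 : ℕ) : ℤ) with hm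
  have hmn : m = (n : ℤ) - 1 := by simp [hm]; omega
  have hmpos : 0 < m := by omega
  set A : ℤ := b * (lam t : ℤ) with hA
  have hnd : ¬ m ∣ A := by
    intro hdvd
    have hcop' : IsCoprime m ((lam t : ℕ) : ℤ) := by
      rw [Int.isCoprime_iff_gcd_eq_one, Int.gcd_natCast_natCast, Nat.gcd_comm]
      exact hcop t
    have hdb : m ∣ b := hcop'.dvd_of_dvd_mul_right hdvd
    have := Int.le_of_dvd (by omega) hdb
    omega
  rw [cC_eq d n hn lam _ t, cC_eq d n hn lam b t, ← hm, ← hA]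
  have h1 : -(((n : ℤ) - 1 - b) * (lam t : ℤ)) = A + (-(lam t : ℤ)) * m := by
    rw [hA, hmn]; ring
  rw [h1, Int.add_mul_ediv_right _ _ (by omega : m ≠ 0),
    ediv_neg_of_not_dvd hmpos hnd]
  ring

/-- Suppose `gcd(λ_t, n-1) = 1` for every `t`. Then the map `x ↦ n-1-x` on
`{1, …, n-2}` is an order-reversing poset isomorphism of `P(λ)∖{0}` onto itself: it is a
bijection of `{1, …, n-2}`, and for all `1 ≤ i, j ≤ n-2` with `i ≠ j`, `i ≺ j` in `P(λ)`
iff `n-1-j ≺ n-1-i` in `P(λ)`. In particular `P(λ)` is self-dual. -/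
theorem stmt_8 (d n : ℕ) (hd : 1 ≤ d) (hn : 3 ≤ n) (lam : Fin d → ℕ)
    (hpos : ∀ t, 0 < lam t) (hsum : ∑ t, lam t = n)
    (hcop : ∀ t, Nat.Coprime (lam t) (n - 1)) :
    Set.BijOn (fun x : ℤ => (n : ℤ) - 1 - x)
      (Set.Icc 1 ((n : ℤ) - 2)) (Set.Icc 1 ((n : ℤ) - 2)) ∧
    ∀ i j : ℤ, 1 ≤ i → i ≤ (n : ℤ) - 2 → 1 ≤ j → j ≤ (n : ℤ) - 2 → i ≠ j →
      (precRel d n lam i j ↔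
        precRel d n lam ((n : ℤ) - 1 - j) ((n : ℤ) - 1 - i)) := by
  have hn3 : (3 : ℤ) ≤ (n : ℤ) := by exact_mod_cast hn
  constructor
  · refine ⟨fun x hx => ?_, fun x hx y hy hxy => by dsimp at hxy; omega, fun y hy => ?_⟩
    · simp only [Set.mem_Icc] at hx ⊢; omega
    · simp only [Set.mem_Icc] at hy
      exact ⟨(n : ℤ) - 1 - y, by simp only [Set.mem_Icc]; omega, by dsimp; omega⟩
  · intro i j hi1 hi2 hj1 hj2 hij
    rw [prec_iff, prec_iff]
    have hdiff : (n : ℤ) - 1 - i - ((n : ℤ) - 1 - j) = j - i := by ring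
    rw [hdiff]
    rcases lt_or_gt_of_ne hij with hlt | hgt
    · have hiff : ∀ t : Fin d,
          (cC d n lam i t + cC d n lam (j - i) t = cC d n lam j t) ↔
          (cC d n lam ((n : ℤ) - 1 - j) t + cC d n lam (j - i) t
            = cC d n lam ((n : ℤ) - 1 - i) t) := by
        intro t
        rw [cC_reflect d n hn lam hcop j hj1 hj2 t,
          cC_reflect d n hn lam hcop i hi1 hi2 t]
        omega
      constructor
      · rintro ⟨h0, h1, ht⟩
        exact ⟨h0, h1, fun t => (hiff t).mp (ht t)⟩
      · rintro ⟨h0, h1, ht⟩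
        exact ⟨h0, h1, fun t => (hiff t).mpr (ht t)⟩
    · constructor
      · rintro ⟨h0, -, -⟩; omega
      · rintro ⟨h0, -, -⟩; omega
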